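/- Let f, g : ℝ^d × ℝ^p → ℝ with f continuously differentiable and g twice continuously differentiable. Let y* : ℝ^d → ℝ^p be a differentiable map such that ∇_y g(x, y*(x)) = 0 for every x ∈ ℝ^d and such that the Hessian ∇²_{yy} g(x, y*(x)) ∈ ℝ^{p×p} is invertible for every x. Define F(x) = f(x, y*(x)). Then F is differentiable and for every x ∈ ℝ^d, ∇F(x) = ∇_x f(x, y*(x)) − ∇²_{xy} g(x, y*(x)) [∇²_{yy} g(x, y*(x))]^{-1} ∇_y f(x, y*(x)). -/

import Mathlib

open scoped RealInnerProductSpace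

/-- Hypergradient formula: if `y*(x)` is a differentiable implicit solution
map with `∇_y g(x, y*(x)) = 0` and invertible Hessian `∇²_{yy} g(x, y*(x))`, then
`F(x) = f(x, y*(x))` is differentiable with
`∇F(x) = ∇_x f(x,y*(x)) − ∇²_{xy} g(x,y*(x)) [∇²_{yy} g(x,y*(x))]⁻¹ ∇_y f(x,y*(x))`.
Here the cross derivative `∇²_{xy} g` is the adjoint of the Fréchet derivative in `x` of
`∇_y g`. -/
theorem stmt_3 {d p : ℕ}
    (f g : EuclideanSpace ℝ (Fin d) → EuclideanSpace ℝ (Fin p) → ℝ)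
    (fx : EuclideanSpace ℝ (Fin d) → EuclideanSpace ℝ (Fin p) → EuclideanSpace ℝ (Fin d))
    (fy : EuclideanSpace ℝ (Fin d) → EuclideanSpace ℝ (Fin p) → EuclideanSpace ℝ (Fin p))
    -- `f` is (continuously) differentiable, with joint derivative given by the partial
    -- gradients `fx`, `fy`:
    (hf : ∀ x y, HasFDerivAt (fun q : EuclideanSpace ℝ (Fin d) × EuclideanSpace ℝ (Fin p) => f q.1 q.2)
      ((innerSL ℝ (fx x y)).comp (ContinuousLinearMap.fst ℝ _ _)
        + (innerSL ℝ (fy x y)).comp (ContinuousLinearMap.snd ℝ _ _)) (x, y))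
    -- `gy` is the partial gradient of `g` in `y`:
    (gy : EuclideanSpace ℝ (Fin d) → EuclideanSpace ℝ (Fin p) → EuclideanSpace ℝ (Fin p))
    (hgy : ∀ x y, HasGradientAt (fun y' => g x y') (gy x y) y)
    -- `g` is twice differentiable: `gy` has joint derivative with `x`-block `Gyx` and
    -- `y`-block (Hessian) `Hyy`:
    (Gyx : EuclideanSpace ℝ (Fin d) → EuclideanSpace ℝ (Fin p) →
      (EuclideanSpace ℝ (Fin d) →L[ℝ] EuclideanSpace ℝ (Fin p)))
    (Hyy : EuclideanSpace ℝ (Fin d) → EuclideanSpace ℝ (Fin p) →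
      (EuclideanSpace ℝ (Fin p) →L[ℝ] EuclideanSpace ℝ (Fin p)))
    (hgy' : ∀ x y, HasFDerivAt (fun q : EuclideanSpace ℝ (Fin d) × EuclideanSpace ℝ (Fin p) => gy q.1 q.2)
      ((Gyx x y).comp (ContinuousLinearMap.fst ℝ _ _)
        + (Hyy x y).comp (ContinuousLinearMap.snd ℝ _ _)) (x, y))
    -- the Hessian is symmetric:
    (hsymm : ∀ x y v w, ⟪Hyy x y v, w⟫ = ⟪v, Hyy x y w⟫)
    -- `y*` is differentiable with `∇_y g(x, y*(x)) = 0`: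
    (ystar : EuclideanSpace ℝ (Fin d) → EuclideanSpace ℝ (Fin p))
    (hystar : Differentiable ℝ ystar)
    (hcrit : ∀ x, gy x (ystar x) = 0)
    -- the Hessian `∇²_{yy} g(x, y*(x))` is invertible, with inverse `Hinv x`:
    (Hinv : EuclideanSpace ℝ (Fin d) → (EuclideanSpace ℝ (Fin p) →L[ℝ] EuclideanSpace ℝ (Fin p)))
    (hinv1 : ∀ x, (Hyy x (ystar x)).comp (Hinv x) = ContinuousLinearMap.id ℝ _)
    (hinv2 : ∀ x, (Hinv x).comp (Hyy x (ystar x)) = ContinuousLinearMap.id ℝ _) :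
    ∀ x, HasGradientAt (fun x' => f x' (ystar x'))
      (fx x (ystar x)
        - ContinuousLinearMap.adjoint (Gyx x (ystar x)) (Hinv x (fy x (ystar x)))) x := by

  intro x
  set y := ystar x with hy
  have hD : DifferentiableAt ℝ ystar x := hystar x
  set D := fderiv ℝ ystar x with hDdef
  have hDer : HasFDerivAt ystar D x := hD.hasFDerivAt
  have hpair : HasFDerivAt (fun x' => (x', ystar x'))
      ((ContinuousLinearMap.id ℝ _).prod D) x := HasFDerivAt.prodMk (hasFDerivAt_id x) hDer
  have hchain : HasFDerivAt (fun x' => gy x' (ystar x'))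
      (((Gyx x y).comp (ContinuousLinearMap.fst ℝ _ _)
        + (Hyy x y).comp (ContinuousLinearMap.snd ℝ _ _)).comp
        ((ContinuousLinearMap.id ℝ _).prod D)) x := by
    have h := (hgy' x y).comp x hpair; exact h
  have hzero : HasFDerivAt (fun x' => gy x' (ystar x'))
      (0 : EuclideanSpace ℝ (Fin d) →L[ℝ] EuclideanSpace ℝ (Fin p)) x := by
    have h : (fun x' => gy x' (ystar x')) = fun _ => (0 : EuclideanSpace ℝ (Fin p)) := by
      funext x'; exact hcrit x'
    rw [h]; exact hasFDerivAt_const _ _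
  have heq : ∀ v, Gyx x y v + Hyy x y (D v) = 0 := by
    intro v
    have h1 := hchain.unique hzero
    have := congrArg (fun L : EuclideanSpace ℝ (Fin d) →L[ℝ] EuclideanSpace ℝ (Fin p) => L v) h1
    simpa using this
  have hDeq : ∀ v, D v = -(Hinv x (Gyx x y v)) := by
    intro v
    have h2 := congrArg (fun w => Hinv x w) (heq v)
    have h3 : Hinv x (Hyy x y (D v)) = D v := by
      have := congrArg (fun L : EuclideanSpace ℝ (Fin p) →L[ℝ] EuclideanSpace ℝ (Fin p) => L (D v)) (hinv2 x)
      simpa using this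
    simp [map_add, h3] at h2
    linear_combination (norm := abel) h2
  have hHisymm : ∀ a b : EuclideanSpace ℝ (Fin p), ⟪Hinv x a, b⟫ = ⟪a, Hinv x b⟫ := by
    intro a b
    have e1 : Hyy x y (Hinv x b) = b := by
      have := congrArg (fun L : EuclideanSpace ℝ (Fin p) →L[ℝ] EuclideanSpace ℝ (Fin p) => L b) (hinv1 x)
      simpa using this
    have e2 : Hyy x y (Hinv x a) = a := by
      have := congrArg (fun L : EuclideanSpace ℝ (Fin p) →L[ℝ] EuclideanSpace ℝ (Fin p) => L a) (hinv1 x)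
      simpa using this
    calc ⟪Hinv x a, b⟫ = ⟪Hinv x a, Hyy x y (Hinv x b)⟫ := by rw [e1]
      _ = ⟪Hyy x y (Hinv x a), Hinv x b⟫ := (hsymm x y _ _).symm
      _ = ⟪a, Hinv x b⟫ := by rw [e2]
  have hF : HasFDerivAt (fun x' => f x' (ystar x'))
      ((((innerSL ℝ (fx x y)).comp (ContinuousLinearMap.fst ℝ _ _)
        + (innerSL ℝ (fy x y)).comp (ContinuousLinearMap.snd ℝ _ _)).comp
        ((ContinuousLinearMap.id ℝ _).prod D))) x := by
    have h := (hf x y).comp x hpair; exact h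
  rw [hasGradientAt_iff_hasFDerivAt]
  refine HasFDerivAt.congr_fderiv hF ?_
  symm
  ext w
  have hadj : ⟪ContinuousLinearMap.adjoint (Gyx x y) (Hinv x (fy x y)), w⟫
      = ⟪Hinv x (fy x y), Gyx x y w⟫ := ContinuousLinearMap.adjoint_inner_left _ _ _
  simp [InnerProductSpace.toDual, inner_sub_left, hadj, hHisymm, hDeq w, inner_neg_right]
  ring
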